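/- Let A be an evolution algebra with natural basis B and I an ideal of A. The following are equivalent: (1) I has the absorption property; (2) H_I = I ∩ B; (3) I = I_{H_I}. -/

import Mathlib

variable {K ι A : Type*}

section Defs
variable [Field K] [NonUnitalNonAssocCommRing A] [Module K A]
  [SMulCommClass K A A] [IsScalarTower K A A]

/-- A natural basis: distinct basis elements multiply to zero. -/
def IsNaturalBasis (b : Module.Basis ι K A) : Prop := ∀ i j : ι, i ≠ j → b i * b j = 0

/-- Edge i → j in the associated graph: the j-th coordinate of (b i)² is nonzero. -/
def EvolEdge (b : Module.Basis ι K A) (i j : ι) : Prop := b.repr (b i * b i) j ≠ 0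

/-- Hereditary subset of vertices: closed under edges (hence under reachability). -/
def EvolHereditary (b : Module.Basis ι K A) (H : Set ι) : Prop :=
  ∀ i ∈ H, ∀ j, EvolEdge b i j → j ∈ H

/-- Saturated subset: a regular vertex all of whose edge-targets lie in H belongs to H. -/
def EvolSaturated (b : Module.Basis ι K A) (H : Set ι) : Prop :=
  ∀ i : ι, b i * b i ≠ 0 → (∀ j, EvolEdge b i j → j ∈ H) → i ∈ H

/-- Ideal of a (nonunital, nonassociative, commutative) algebra: a submodule absorbing
multiplication. -/
def IsEvolIdeal (I : Submodule K A) : Prop := ∀ a : A, ∀ x ∈ I, a * x ∈ I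

/-- I_H, the span of the basis elements indexed by H. -/
def idealOf (b : Module.Basis ι K A) (H : Set ι) : Submodule K A := Submodule.span K (b '' H)

/-- H_I = {e ∈ B : e² ∈ I}. -/
def hSet (b : Module.Basis ι K A) (I : Submodule K A) : Set ι := {i | b i * b i ∈ I}

/-- Maximal ideal. -/
def IsMaxIdeal (I : Submodule K A) : Prop :=
  IsEvolIdeal I ∧ I ≠ ⊤ ∧
    ∀ J : Submodule K A, IsEvolIdeal J → I ≤ J → J = I ∨ J = ⊤

/-- Absorption property of an ideal. -/
def Absorption (I : Submodule K A) : Prop := ∀ x : A, (∀ a : A, x * a ∈ I) → x ∈ I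

end Defs

/-- A², the span of all products. -/
def sqIdeal (K A : Type*) [Field K] [NonUnitalNonAssocCommRing A] [Module K A] :
    Submodule K A :=
  Submodule.span K {x : A | ∃ a c : A, x = a * c}

variable [Field K] [NonUnitalNonAssocCommRing A] [Module K A]
  [SMulCommClass K A A] [IsScalarTower K A A]


lemma mul_basis_eq (b : Module.Basis ι K A) (hb : IsNaturalBasis b) (x : A) (j : ι) :
    x * b j = b.repr x j • (b j * b j) := by
  conv_lhs => rw [← b.linearCombination_repr x]
  rw [Finsupp.linearCombination_apply]
  rw [Finsupp.sum, Finset.sum_mul, Finset.sum_eq_single j]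
  · rw [smul_mul_assoc]
  · intro i _ hij
    rw [smul_mul_assoc, hb i j hij, smul_zero]
  · intro hj
    rw [Finsupp.notMem_support_iff.mp hj, zero_smul, zero_mul]

lemma support_subset_hSet (b : Module.Basis ι K A) (hb : IsNaturalBasis b) (I : Submodule K A)
    (x : A) (hx : ∀ a : A, x * a ∈ I) : ∀ i, b.repr x i ≠ 0 → i ∈ hSet b I := by
  intro i hi
  have h := hx (b i)
  rw [mul_basis_eq b hb] at h
  have h2 : b i * b i = (b.repr x i)⁻¹ • (b.repr x i • (b i * b i)) := by
    rw [smul_smul, inv_mul_cancel₀ hi, one_smul]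
  show b i * b i ∈ I
  rw [h2]
  exact I.smul_mem _ h

lemma mem_span_of_coords (b : Module.Basis ι K A) (H : Set ι) (x : A)
    (hx : ∀ i, b.repr x i ≠ 0 → i ∈ H) : x ∈ idealOf b H := by
  rw [← b.linearCombination_repr x, Finsupp.linearCombination_apply, Finsupp.sum]
  apply Submodule.sum_mem
  intro i hi
  exact Submodule.smul_mem _ _
    (Submodule.subset_span ⟨i, hx i (Finsupp.mem_support_iff.mp hi), rfl⟩)

theorem stmt17 (b : Module.Basis ι K A) (hb : IsNaturalBasis b) (I : Submodule K A)
    (hI : IsEvolIdeal I) :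
    (Absorption I ↔ hSet b I = {i : ι | b i ∈ I}) ∧
      (Absorption I ↔ I = idealOf b (hSet b I)) := by
  have hbI : ∀ habs : Absorption I, ∀ i ∈ hSet b I, b i ∈ I := by
    intro habs i hi
    apply habs
    intro a
    rw [mul_comm, mul_basis_eq b hb a i]
    exact I.smul_mem _ hi
  have key : ∀ x : A, (∀ a : A, x * a ∈ I) → x ∈ idealOf b (hSet b I) := fun x hx =>
    mem_span_of_coords b _ x (support_subset_hSet b hb I x hx)
  have hII : I ≤ idealOf b (hSet b I) := by
    intro x hx
    apply key
    intro a
    rw [mul_comm]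
    exact hI a x hx
  constructor
  · constructor
    · intro habs
      apply Set.Subset.antisymm
      · intro i hi
        exact hbI habs i hi
      · intro i hi
        exact hI (b i) (b i) hi
    · intro h2 x hx
      have := key x hx
      have hle : idealOf b (hSet b I) ≤ I := by
        rw [h2]
        apply Submodule.span_le.mpr
        rintro _ ⟨i, hi, rfl⟩
        exact hi
      exact hle this
  · constructor
    · intro habs
      apply le_antisymm hII
      apply Submodule.span_le.mpr
      rintro _ ⟨i, hi, rfl⟩
      exact hbI habs i hi
    · intro h3 x hx
      rw [h3]
      exact key x hx
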